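/- The number of juggling sequences of period n with fewer than b balls equals b^n. -/

import Mathlib

namespace JugglingAux

/-- number of weak excedances -/
def W {n : ℕ} (σ : Equiv.Perm (Fin n)) : ℕ := (Finset.univ.filter (fun i => i ≤ σ i)).card

/-- number of weak anti-excedances -/
def A {n : ℕ} (σ : Equiv.Perm (Fin n)) : ℕ := (Finset.univ.filter (fun i => σ i ≤ i)).card

lemma W_le {n : ℕ} (σ : Equiv.Perm (Fin n)) : W σ ≤ n := by
  classical
  simpa [W] using Finset.card_filter_le Finset.univ (fun i => i ≤ σ i)

lemma binom_key (n w b : ℕ) (hw : w ≤ n) :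
    w * (n+1+b-w).choose (n+1) + (n+1-w) * (n+b-w).choose (n+1)
      = b * ((n+b-w).choose n) := by
  obtain ⟨d, rfl⟩ : ∃ d, n = w + d := ⟨n - w, by omega⟩
  have h1 : w + d + 1 + b - w = d + b + 1 := by omega
  have h2 : w + d + b - w = d + b := by omega
  have h3 : w + d + 1 - w = d + 1 := by omega
  rw [h1, h2, h3]
  have pascal : (d + b + 1).choose (w + d + 1)
      = (d+b).choose (w+d) + (d+b).choose (w+d+1) := Nat.choose_succ_succ' _ _
  have key : (d + b).choose (w + d + 1) * (w + d + 1)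
      = (d+b).choose (w+d) * (d + b - (w+d)) := Nat.choose_succ_right_eq _ _
  rcases le_or_gt w b with h | h
  · have hbw : d + b - (w + d) = b - w := by omega
    rw [hbw] at key
    rw [pascal]
    set C1 := (d+b).choose (w+d)
    set C2 := (d+b).choose (w+d+1)
    calc w * (C1 + C2) + (d + 1) * C2
        = w * C1 + C2 * (w + d + 1) := by ring
      _ = w * C1 + C1 * (b - w) := by rw [key]
      _ = (w + (b - w)) * C1 := by ring
      _ = b * C1 := by congr 1; omega
  · have hz : (d + b).choose (w + d) = 0 := Nat.choose_eq_zero_of_lt (by omega)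
    have hz2 : (d + b + 1).choose (w + d + 1) = 0 := Nat.choose_eq_zero_of_lt (by omega)
    have hz3 : (d + b).choose (w + d + 1) = 0 := Nat.choose_eq_zero_of_lt (by omega)
    simp [hz, hz2, hz3]

lemma finite_aux (k m a : ℕ) : Finite {q : Fin k → ℕ // a + ∑ i, q i ≤ m} := by
  apply Finite.of_injective
    (fun q => (fun i => (⟨q.1 i, by
      have h := Finset.single_le_sum (f := q.1) (fun _ _ => Nat.zero_le _) (Finset.mem_univ i)
      have h2 := q.2
      omega⟩ : Fin (m+1)) : Fin k → Fin (m+1)))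
  intro q q' h
  ext i
  exact congrArg Fin.val (congrFun h i)

lemma nat_card_sigma {ι : Type*} [Fintype ι] (f : ι → Type*) [∀ i, Finite (f i)] :
    Nat.card (Σ i, f i) = ∑ i, Nat.card (f i) := by
  letI : ∀ i, Fintype (f i) := fun i => Fintype.ofFinite _
  rw [Nat.card_eq_fintype_card, Fintype.card_sigma]
  exact Finset.sum_congr rfl (fun i _ => (Nat.card_eq_fintype_card).symm)

lemma card_sum_le : ∀ (k m : ℕ), Nat.card {q : Fin k → ℕ // ∑ i, q i ≤ m} = (m + k).choose k := by
  intro k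
  induction k with
  | zero =>
    intro m
    have : Nat.card {q : Fin 0 → ℕ // ∑ i, q i ≤ m} = 1 := by
      rw [Nat.card_eq_one_iff_unique]
      constructor
      · constructor
        intro q q'
        ext i
        exact absurd i.2 (by omega)
      · exact ⟨⟨fun i => 0, by simp⟩⟩
    rw [this, Nat.choose_zero_right]
  | succ k ih =>
    intro m
    haveI : ∀ t : Fin (m+1), Finite {q : Fin k → ℕ // ∑ i, q i ≤ m - t} := by
      intro t
      have := finite_aux k (m - t) 0
      simpa using this
    have e : {q : Fin (k+1) → ℕ // ∑ i, q i ≤ m}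
        ≃ Σ t : Fin (m+1), {q : Fin k → ℕ // ∑ i, q i ≤ m - (t : ℕ)} :=
      { toFun := fun q => ⟨⟨q.1 0, by
          have h := q.2
          rw [Fin.sum_univ_succ] at h
          omega⟩, ⟨fun i => q.1 i.succ, by
          have h := q.2
          rw [Fin.sum_univ_succ] at h
          show ∑ i : Fin k, q.1 i.succ ≤ m - q.1 0
          omega⟩⟩
        invFun := fun x => ⟨Fin.cons (x.1 : ℕ) x.2.1, by
          rw [Fin.sum_univ_succ]
          simp only [Fin.cons_zero, Fin.cons_succ]
          have h := x.2.2
          have h2 := x.1.2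
          omega⟩
        left_inv := fun q => by
          apply Subtype.ext
          exact Fin.cons_self_tail q.1
        right_inv := fun x => rfl }
    rw [Nat.card_congr e, nat_card_sigma]
    have : ∀ t : Fin (m+1), Nat.card {q : Fin k → ℕ // ∑ i, q i ≤ m - (t : ℕ)}
        = ((m - (t:ℕ)) + k).choose k := fun t => ih (m - (t:ℕ))
    rw [Finset.sum_congr rfl (fun t _ => this t)]
    rw [Fin.sum_univ_eq_sum_range (fun t => ((m - t) + k).choose k) (m+1)]
    have hrefl := Finset.sum_range_reflect (fun j => (j + k).choose k) (m+1)
    have : ∀ j ∈ Finset.range (m+1), ((m - j) + k).choose k = ((m + 1 - 1 - j) + k).choose k := by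
      intro j hj
      have h2 : m - j = m + 1 - 1 - j := by omega
      rw [h2]
    rw [Finset.sum_congr rfl this, hrefl, Nat.sum_range_add_choose]
    congr 1

lemma card_fiber (k m a : ℕ) (hk : 0 < k) :
    Nat.card {q : Fin k → ℕ // a + ∑ i, q i ≤ m} = (k + m - a).choose k := by
  rcases le_or_gt a m with h | h
  · have e : {q : Fin k → ℕ // a + ∑ i, q i ≤ m} ≃ {q : Fin k → ℕ // ∑ i, q i ≤ m - a} :=
      Equiv.subtypeEquivRight (fun q => by omega)
    rw [Nat.card_congr e, card_sum_le]
    congr 1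
    omega
  · haveI : IsEmpty {q : Fin k → ℕ // a + ∑ i, q i ≤ m} :=
      ⟨fun q => absurd q.2 (by have : 0 ≤ ∑ i, q.1 i := Nat.zero_le _; omega)⟩
    rw [Nat.card_of_isEmpty]
    symm
    exact Nat.choose_eq_zero_of_lt (by omega)

lemma W_eq_sum {n : ℕ} (σ : Equiv.Perm (Fin n)) :
    W σ = ∑ i : Fin n, (if i ≤ σ i then 1 else 0) := Finset.card_filter _ _

lemma W_decompose_zero {n : ℕ} (e : Equiv.Perm (Fin n)) :
    W (Equiv.Perm.decomposeFin.symm (0, e)) = W e + 1 := by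
  rw [W_eq_sum, Fin.sum_univ_succ]
  have h0 : Equiv.Perm.decomposeFin.symm ((0 : Fin (n+1)), e) 0 = 0 :=
    Equiv.Perm.decomposeFin_symm_apply_zero 0 e
  rw [h0]
  simp only [le_refl, if_pos]
  have hs : ∀ x : Fin n, Equiv.Perm.decomposeFin.symm ((0 : Fin (n+1)), e) x.succ = (e x).succ := by
    intro x
    rw [Equiv.Perm.decomposeFin_symm_apply_succ]
    simp
  rw [Finset.sum_congr rfl (fun x _ => by rw [hs x])]
  have : ∀ x : Fin n, (if x.succ ≤ (e x).succ then (1:ℕ) else 0) = if x ≤ e x then 1 else 0 := by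
    intro x
    simp [Fin.succ_le_succ_iff]
  rw [Finset.sum_congr rfl (fun x _ => this x), ← W_eq_sum]
  omega

lemma W_decompose_succ {n : ℕ} (e : Equiv.Perm (Fin n)) (j : Fin n) :
    W (Equiv.Perm.decomposeFin.symm (j.succ, e))
      = W e + 1 - (if e.symm j ≤ j then 1 else 0) := by
  classical
  rw [W_eq_sum, Fin.sum_univ_succ]
  have h0 : Equiv.Perm.decomposeFin.symm (j.succ, e) 0 = j.succ :=
    Equiv.Perm.decomposeFin_symm_apply_zero j.succ e
  rw [h0]
  have h0' : (if (0 : Fin (n+1)) ≤ j.succ then (1:ℕ) else 0) = 1 := by simp [Fin.zero_le]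
  rw [h0']
  -- the rest of the sum
  set x₀ := e.symm j with hx₀
  have hval : ∀ x : Fin n, Equiv.Perm.decomposeFin.symm (j.succ, e) x.succ
      = if e x = j then 0 else (e x).succ := by
    intro x
    rw [Equiv.Perm.decomposeFin_symm_apply_succ]
    by_cases h : e x = j
    · rw [if_pos h, h]
      exact Equiv.swap_apply_right 0 j.succ
    · rw [if_neg h]
      apply Equiv.swap_apply_of_ne_of_ne
      · exact Fin.succ_ne_zero _
      · simpa [Fin.succ_inj] using h
  have hterm : ∀ x : Fin n,
      (if x.succ ≤ Equiv.Perm.decomposeFin.symm (j.succ, e) x.succ then (1:ℕ) else 0)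
        = if e x = j then 0 else (if x ≤ e x then 1 else 0) := by
    intro x
    rw [hval x]
    by_cases h : e x = j
    · simp only [if_pos h]
      have : ¬ (x.succ ≤ (0 : Fin (n+1))) := by
        simp [Fin.le_zero_iff, Fin.succ_ne_zero]
      rw [if_neg this]
    · simp only [if_neg h]
      simp [Fin.succ_le_succ_iff]
  rw [Finset.sum_congr rfl (fun x _ => hterm x)]
  -- now compute ∑ x, if e x = j then 0 else χ x
  have hsum1 : (fun x : Fin n => if e x = j then (0:ℕ) else (if x ≤ e x then 1 else 0)) x₀ +
      ∑ x ∈ Finset.univ.erase x₀, (if e x = j then (0:ℕ) else (if x ≤ e x then 1 else 0))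
      = ∑ x : Fin n, (if e x = j then (0:ℕ) else (if x ≤ e x then 1 else 0)) :=
    Finset.add_sum_erase _ (fun x : Fin n => if e x = j then (0:ℕ) else (if x ≤ e x then 1 else 0)) (Finset.mem_univ x₀)
  have hsum2 : (fun x : Fin n => if x ≤ e x then (1:ℕ) else 0) x₀ +
      ∑ x ∈ Finset.univ.erase x₀, (if x ≤ e x then (1:ℕ) else 0)
      = ∑ x : Fin n, (if x ≤ e x then (1:ℕ) else 0) :=
    Finset.add_sum_erase _ (fun x : Fin n => if x ≤ e x then (1:ℕ) else 0) (Finset.mem_univ x₀)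
  have hx0val : e x₀ = j := Equiv.apply_symm_apply e j
  have hz : (fun x : Fin n => if e x = j then (0:ℕ) else (if x ≤ e x then 1 else 0)) x₀ = 0 := by
    simp [hx0val]
  have hagree : ∑ x ∈ Finset.univ.erase x₀, (if e x = j then (0:ℕ) else (if x ≤ e x then 1 else 0))
      = ∑ x ∈ Finset.univ.erase x₀, (if x ≤ e x then (1:ℕ) else 0) := by
    apply Finset.sum_congr rfl
    intro x hx
    have hne : x ≠ x₀ := (Finset.mem_erase.mp hx).1
    have : e x ≠ j := by
      intro hc
      apply hne
      rw [hx₀, ← hc, Equiv.symm_apply_apply]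
    rw [if_neg this]
  have hWsum : ∑ x : Fin n, (if x ≤ e x then (1:ℕ) else 0) = W e := (W_eq_sum e).symm
  have hx0cond : (fun x : Fin n => if x ≤ e x then (1:ℕ) else 0) x₀
      = if e.symm j ≤ j then 1 else 0 := by
    simp only [hx₀, Equiv.apply_symm_apply]
  simp only [hz, zero_add] at hsum1
  rw [hx0cond] at hsum2
  rw [hWsum] at hsum2
  rw [← hsum1, hagree]
  by_cases h : x₀ ≤ j
  · rw [if_pos h] at hsum2 ⊢
    omega
  · rw [if_neg h] at hsum2 ⊢
    omega

lemma sum_W (n : ℕ) : ∀ b, ∑ σ : Equiv.Perm (Fin n), (n + b - W σ).choose n = b ^ n := by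
  induction n with
  | zero =>
    intro b
    rw [pow_zero]
    have h1 : ∀ σ : Equiv.Perm (Fin 0), (0 + b - W σ).choose 0 = 1 :=
      fun σ => Nat.choose_zero_right _
    rw [Finset.sum_congr rfl (fun σ _ => h1 σ), Finset.sum_const, Finset.card_univ]
    simp
  | succ n ih =>
    intro b
    rw [← Equiv.sum_comp (Equiv.Perm.decomposeFin.symm)
      (fun τ => (n + 1 + b - W τ).choose (n+1))]
    rw [Fintype.sum_prod_type]
    -- outer sum over p : Fin (n+1), inner over e; swap
    rw [Finset.sum_comm]
    have inner : ∀ e : Equiv.Perm (Fin n),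
        (∑ p : Fin (n+1), (n + 1 + b - W (Equiv.Perm.decomposeFin.symm (p, e))).choose (n+1))
        = b * ((n + b - W e).choose n) := by
      intro e
      rw [Fin.sum_univ_succ]
      rw [W_decompose_zero]
      have hstep : ∀ j : Fin n,
          (n + 1 + b - W (Equiv.Perm.decomposeFin.symm (j.succ, e))).choose (n+1)
          = if e.symm j ≤ j then (n + 1 + b - W e).choose (n+1)
            else (n + b - W e).choose (n+1) := by
        intro j
        rw [W_decompose_succ]
        by_cases h : e.symm j ≤ j
        · rw [if_pos h, if_pos h]
          have hh : n + 1 + b - (W e + 1 - 1) = n + 1 + b - W e := by omega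
          rw [hh]
        · rw [if_neg h, if_neg h]
          have hh : n + 1 + b - (W e + 1 - 0) = n + b - W e := by omega
          rw [hh]
      rw [Finset.sum_congr rfl (fun j _ => hstep j)]
      -- reindex j := e i
      rw [← Equiv.sum_comp e (fun j => if e.symm j ≤ j then (n + 1 + b - W e).choose (n+1)
            else (n + b - W e).choose (n+1))]
      have hsimp : ∀ i : Fin n, (if e.symm (e i) ≤ e i then (n + 1 + b - W e).choose (n+1)
            else (n + b - W e).choose (n+1))
          = if i ≤ e i then (n + 1 + b - W e).choose (n+1) else (n + b - W e).choose (n+1) := by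
        intro i
        rw [Equiv.symm_apply_apply]
      rw [Finset.sum_congr rfl (fun i _ => hsimp i)]
      rw [Finset.sum_ite, Finset.sum_const, Finset.sum_const, smul_eq_mul, smul_eq_mul]
      have hcard1 : (Finset.univ.filter (fun i : Fin n => i ≤ e i)).card = W e := rfl
      have hcard2 : (Finset.univ.filter (fun i : Fin n => ¬ i ≤ e i)).card = n - W e := by
        have hh := Finset.card_filter_add_card_filter_not
          (s := (Finset.univ : Finset (Fin n))) (p := fun i : Fin n => i ≤ e i)
        rw [Finset.card_univ, Fintype.card_fin] at hh
        have hW := W_le e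
        rw [hcard1] at hh
        omega
      rw [hcard1, hcard2]
      have hY : n + 1 + b - (W e + 1) = n + b - W e := by omega
      rw [hY]
      have hkey := binom_key n (W e) b (W_le e)
      set X := (n + 1 + b - W e).choose (n+1) with hX
      set Y := (n + b - W e).choose (n+1) with hYdef
      set C := (n + b - W e).choose n with hC
      have hW := W_le e
      have hexp : (n + 1 - W e) * Y = (n - W e) * Y + Y := by
        rw [show n + 1 - W e = (n - W e) + 1 by omega, Nat.succ_mul]
      omega
    rw [Finset.sum_congr rfl (fun e _ => inner e), ← Finset.mul_sum, ih b, pow_succ]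
    ring

lemma A_eq_sum {n : ℕ} (σ : Equiv.Perm (Fin n)) :
    A σ = ∑ i : Fin n, (if σ i ≤ i then 1 else 0) := Finset.card_filter _ _

lemma W_eq_sum' {n : ℕ} (σ : Equiv.Perm (Fin n)) :
    W σ = ∑ i : Fin n, (if i ≤ σ i then 1 else 0) := Finset.card_filter _ _

lemma A_rev {n : ℕ} (σ : Equiv.Perm (Fin n)) :
    A (Equiv.permCongr (Fin.revPerm : Equiv.Perm (Fin n)) σ) = W σ := by
  rw [A_eq_sum, W_eq_sum']
  rw [← Equiv.sum_comp (Fin.revPerm : Equiv.Perm (Fin n))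
    (fun i => if (Equiv.permCongr (Fin.revPerm : Equiv.Perm (Fin n)) σ) i ≤ i then (1:ℕ) else 0)]
  apply Finset.sum_congr rfl
  intro i _
  have h1 : (Equiv.permCongr (Fin.revPerm : Equiv.Perm (Fin n)) σ) (Fin.revPerm i)
      = (σ i).rev := by
    simp [Equiv.permCongr_apply, Equiv.Perm.inv_def, Fin.revPerm_symm, Fin.revPerm_apply, Fin.rev_rev]
  rw [h1]
  have h2 : Fin.revPerm i = i.rev := Fin.revPerm_apply i
  rw [h2]
  have h3 : ((σ i).rev ≤ i.rev) ↔ (i ≤ σ i) := Fin.rev_le_rev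
  simp [h3]

end JugglingAux

open JugglingAux

/-- The number of juggling sequences of period `n` (sequences `T` of nonnegative
integers such that `i + t_i (mod n)` are all distinct) with fewer than `b` balls
(i.e. `(1/n) * ∑ t_i < b`, equivalently `∑ t_i < n * b`) equals `b ^ n`. -/
theorem number_of_juggling_sequences (n b : ℕ) (hn : 0 < n) :
    {T : Fin n → ℕ |
        Function.Injective (fun i : Fin n => (((i : ℕ) + 1 + T i : ℕ) : ZMod n)) ∧
        ∑ i, T i < n * b}.ncard = b ^ n := by
  classical
  haveI : NeZero n := ⟨hn.ne'⟩
  set Θ : Equiv.Perm (Fin n) × (Fin n → ℕ) → (Fin n → ℕ) :=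
    fun p i => ((p.1 i : ℕ) + n - ((i : ℕ) + 1)) % n + n * p.2 i with hΘ
  -- pointwise description of the residue
  have point : ∀ (σ : Equiv.Perm (Fin n)) (i : Fin n),
      ((σ i : ℕ) + n - ((i : ℕ) + 1)) % n + ((i : ℕ) + 1)
        = (σ i : ℕ) + (if σ i ≤ i then n else 0) := by
    intro σ i
    have h1 : (σ i : ℕ) < n := (σ i).isLt
    have h2 : (i : ℕ) < n := i.isLt
    by_cases h : σ i ≤ i
    · have h' : (σ i : ℕ) ≤ (i : ℕ) := Fin.le_def.mp h
      rw [if_pos h, Nat.mod_eq_of_lt (by omega)]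
      omega
    · have h' : ¬ (σ i : ℕ) ≤ (i : ℕ) := fun hc => h (Fin.le_def.mpr hc)
      rw [if_neg h]
      have he : (σ i : ℕ) + n - ((i : ℕ) + 1) = n + ((σ i : ℕ) - ((i : ℕ) + 1)) := by omega
      rw [he, Nat.add_mod_left, Nat.mod_eq_of_lt (by omega)]
      omega
  -- sum identity
  have sumTheta : ∀ (σ : Equiv.Perm (Fin n)) (q : Fin n → ℕ),
      (∑ i, Θ (σ, q) i) + n = n * A σ + n * ∑ i, q i := by
    intro σ q
    have e1 : ∑ i, Θ (σ, q) i
        = (∑ i : Fin n, ((σ i : ℕ) + n - ((i : ℕ) + 1)) % n) + n * ∑ i, q i := by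
      rw [Finset.mul_sum, ← Finset.sum_add_distrib]
    have e2 : (∑ i : Fin n, (((σ i : ℕ) + n - ((i : ℕ) + 1)) % n))
          + (∑ i : Fin n, ((i : ℕ) + 1))
        = (∑ i : Fin n, (σ i : ℕ)) + n * A σ := by
      rw [← Finset.sum_add_distrib]
      rw [Finset.sum_congr rfl (fun i _ => point σ i)]
      rw [Finset.sum_add_distrib]
      congr 1
      rw [Finset.sum_ite, Finset.sum_const, Finset.sum_const, smul_eq_mul, smul_eq_mul,
        mul_zero, add_zero, mul_comm]
      rfl
    have e3 : ∑ i : Fin n, (σ i : ℕ) = ∑ i : Fin n, (i : ℕ) :=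
      Equiv.sum_comp σ (fun i => (i : ℕ))
    have e4 : ∑ i : Fin n, ((i : ℕ) + 1) = (∑ i : Fin n, (i : ℕ)) + n := by
      rw [Finset.sum_add_distrib, Finset.sum_const, Finset.card_univ, Fintype.card_fin,
        smul_eq_mul, mul_one]
    omega
  -- the cast identity
  have castEq : ∀ (σ : Equiv.Perm (Fin n)) (q : Fin n → ℕ) (i : Fin n),
      (((i : ℕ) + 1 + Θ (σ, q) i : ℕ) : ZMod n) = ((σ i : ℕ) : ZMod n) := by
    intro σ q i
    have hp := point σ i
    by_cases h : σ i ≤ i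
    · rw [if_pos h] at hp
      have he : (i : ℕ) + 1 + Θ (σ, q) i = (σ i : ℕ) + n + n * q i := by
        show (i : ℕ) + 1 + (((σ i : ℕ) + n - ((i : ℕ) + 1)) % n + n * q i)
          = (σ i : ℕ) + n + n * q i
        omega
      rw [he]
      push_cast
      rw [ZMod.natCast_self]
      ring
    · rw [if_neg h] at hp
      have he : (i : ℕ) + 1 + Θ (σ, q) i = (σ i : ℕ) + n * q i := by
        show (i : ℕ) + 1 + (((σ i : ℕ) + n - ((i : ℕ) + 1)) % n + n * q i)
          = (σ i : ℕ) + n * q i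
        omega
      rw [he]
      push_cast
      rw [ZMod.natCast_self]
      ring
  -- injectivity of Θ
  have ΘInj : Function.Injective Θ := by
    rintro ⟨σ, q⟩ ⟨σ', q'⟩ h
    have hi : ∀ i : Fin n, ((σ i : ℕ) + n - ((i : ℕ) + 1)) % n + n * q i
        = ((σ' i : ℕ) + n - ((i : ℕ) + 1)) % n + n * q' i := fun i => congrFun h i
    have hr : ∀ i : Fin n, ((σ i : ℕ) + n - ((i : ℕ) + 1)) % n
        = ((σ' i : ℕ) + n - ((i : ℕ) + 1)) % n := by
      intro i
      have e := congrArg (· % n) (hi i)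
      simp only [Nat.add_mul_mod_self_left] at e
      rwa [Nat.mod_mod_of_dvd _ dvd_rfl, Nat.mod_mod_of_dvd _ dvd_rfl] at e
    have hσ : σ = σ' := by
      apply Equiv.ext
      intro i
      apply Fin.ext
      have hp := point σ i
      have hp' := point σ' i
      rw [hr i] at hp
      have l1 : (σ i : ℕ) < n := (σ i).isLt
      have l2 : (σ' i : ℕ) < n := (σ' i).isLt
      by_cases h1 : σ i ≤ i <;> by_cases h2 : σ' i ≤ i <;>
        simp only [if_pos, if_neg, h1, h2, if_true, if_false] at hp hp' <;> omega
    subst hσ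
    have hq : q = q' := by
      funext i
      have h5 := hi i
      rw [hr i] at h5
      have h6 : n * q i = n * q' i := by omega
      exact Nat.eq_of_mul_eq_mul_left hn h6
    rw [hq]
  -- image description
  have memS : {T : Fin n → ℕ |
        Function.Injective (fun i : Fin n => (((i : ℕ) + 1 + T i : ℕ) : ZMod n)) ∧
        ∑ i, T i < n * b}
      = Θ '' {p : Equiv.Perm (Fin n) × (Fin n → ℕ) | A p.1 + ∑ i, p.2 i ≤ b} := by
    ext T
    constructor
    · rintro ⟨hinj, hsum⟩
      set g : Fin n → Fin n := fun i => ⟨((i : ℕ) + 1 + T i) % n, Nat.mod_lt _ hn⟩ with hg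
      have ginj : Function.Injective g := by
        intro i j hij
        apply hinj
        show (((i : ℕ) + 1 + T i : ℕ) : ZMod n) = (((j : ℕ) + 1 + T j : ℕ) : ZMod n)
        rw [← ZMod.natCast_mod ((i : ℕ) + 1 + T i) n, ← ZMod.natCast_mod ((j : ℕ) + 1 + T j) n]
        exact congrArg _ (congrArg Fin.val hij)
      let σ : Equiv.Perm (Fin n) := Equiv.ofBijective g (Finite.injective_iff_bijective.mp ginj)
      have hσg : ∀ i, σ i = g i := fun i => rfl
      have hTeq : Θ (σ, fun i => T i / n) = T := by
        funext i
        show ((σ i : ℕ) + n - ((i : ℕ) + 1)) % n + n * (T i / n) = T i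
        have hmod : ((σ i : ℕ) + n - ((i : ℕ) + 1)) % n = T i % n := by
          have hval : (σ i : ℕ) = ((i : ℕ) + 1 + T i) % n := by rw [hσg]
          rw [hval]
          have h1 : ((i : ℕ) + 1 + T i) % n ≡ (i : ℕ) + 1 + T i [MOD n] := Nat.mod_modEq _ n
          have hlt : ((i : ℕ) + 1 + T i) % n < n := Nat.mod_lt _ hn
          have hi2 : (i : ℕ) < n := i.isLt
          have key : (((i : ℕ) + 1 + T i) % n + n - ((i : ℕ) + 1)) + ((i : ℕ) + 1)
              ≡ T i + ((i : ℕ) + 1) [MOD n] := by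
            have e1 : (((i : ℕ) + 1 + T i) % n + n - ((i : ℕ) + 1)) + ((i : ℕ) + 1)
                = ((i : ℕ) + 1 + T i) % n + n := by omega
            rw [e1]
            calc ((i : ℕ) + 1 + T i) % n + n
                ≡ ((i : ℕ) + 1 + T i) + n [MOD n] := h1.add_right n
              _ = T i + ((i : ℕ) + 1) + n := by ring
              _ ≡ T i + ((i : ℕ) + 1) [MOD n] := Nat.add_modEq_right
          exact Nat.ModEq.add_right_cancel' _ key
        rw [hmod, Nat.mod_add_div]
      refine ⟨(σ, fun i => T i / n), ?_, hTeq⟩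
      show A σ + ∑ i, T i / n ≤ b
      have hs := sumTheta σ (fun i => T i / n)
      rw [hTeq] at hs
      have hmul : n * (b + 1) = n * b + n := by ring
      have h2 : n * A σ + n * (∑ i, T i / n) < n * (b + 1) := by omega
      have h3 : n * (A σ + ∑ i, T i / n) < n * (b + 1) := by
        have : n * (A σ + ∑ i, T i / n) = n * A σ + n * (∑ i, T i / n) := by ring
        omega
      have := Nat.lt_of_mul_lt_mul_left h3
      omega
    · rintro ⟨⟨σ, q⟩, hmem, rfl⟩
      constructor
      · have hfun : (fun i : Fin n => (((i : ℕ) + 1 + Θ (σ, q) i : ℕ) : ZMod n))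
            = fun i => ((σ i : ℕ) : ZMod n) := funext (castEq σ q)
        rw [hfun]
        intro i j hij
        apply σ.injective
        apply Fin.ext
        have hij' : (((σ i : ℕ) : ZMod n)) = (((σ j : ℕ) : ZMod n)) := hij
        have hvi := ZMod.val_cast_of_lt (σ i).isLt
        have hvj := ZMod.val_cast_of_lt (σ j).isLt
        rw [← hvi, ← hvj, hij']
      · have hs := sumTheta σ q
        have hmem' : A σ + ∑ i, q i ≤ b := hmem
        have h1 : n * (A σ + ∑ i, q i) ≤ n * b := Nat.mul_le_mul_left n hmem'
        have h2 : n * (A σ + ∑ i, q i) = n * A σ + n * ∑ i, q i := by ring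
        omega
  rw [memS, Set.ncard_image_of_injOn ΘInj.injOn, ← Nat.card_coe_set_eq]
  haveI : ∀ σ : Equiv.Perm (Fin n), Finite {q : Fin n → ℕ // A σ + ∑ i, q i ≤ b} :=
    fun σ => finite_aux n b (A σ)
  have eq1 : Nat.card {p : Equiv.Perm (Fin n) × (Fin n → ℕ) | A p.1 + ∑ i, p.2 i ≤ b}
      = Nat.card (Σ σ : Equiv.Perm (Fin n), {q : Fin n → ℕ // A σ + ∑ i, q i ≤ b}) :=
    Nat.card_congr ((Equiv.subtypeEquivRight (fun p => Iff.rfl)).trans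
      (Equiv.subtypeProdEquivSigmaSubtype (fun (σ : Equiv.Perm (Fin n)) (q : Fin n → ℕ) => A σ + ∑ i, q i ≤ b)))
  rw [eq1, nat_card_sigma]
  rw [Finset.sum_congr rfl (fun σ _ => card_fiber n b (A σ) hn)]
  rw [← Equiv.sum_comp (Equiv.permCongr (Fin.revPerm : Equiv.Perm (Fin n)))
    (fun σ => (n + b - A σ).choose n)]
  rw [Finset.sum_congr rfl (fun σ _ => by rw [A_rev σ])]
  exact sum_W n b
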